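/- Let a ∈ ℕ, a ≥ 1, and let S(t₁,t₂) be an (a+1)×(a+1) matrix of real polynomials in (cos t₁, cos t₂) such that each entry S_{i,j} is homogeneous of degree 2a+2i+2j+c (for a fixed constant c) and no entry is the zero polynomial. If T is a complex (a+1)×(a+1) matrix with T·S(t₁,t₂) = S(t₁,t₂)·T for all t₁,t₂, then T is a scalar multiple of the identity. -/

import Mathlib

open Finset Polynomial Real

lemma eval_smul_of_isHomogeneous {n : ℕ} (p : MvPolynomial (Fin 2) ℝ)
    (hp : p.IsHomogeneous n) (s : ℝ) (v : Fin 2 → ℝ) :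
    MvPolynomial.eval (s • v) p = s ^ n * MvPolynomial.eval v p := by
  rw [MvPolynomial.eval_eq, MvPolynomial.eval_eq, Finset.mul_sum]
  apply Finset.sum_congr rfl
  intro d hd
  have hdeg : ∑ i ∈ d.support, d i = n := by
    have h := hp (MvPolynomial.mem_support_iff.mp hd)
    simpa [Finsupp.weight_apply, Finsupp.sum, Pi.one_apply, smul_eq_mul, mul_one] using h
  have : ∏ i ∈ d.support, (s • v) i ^ d i
      = s ^ n * ∏ i ∈ d.support, v i ^ d i := by
    simp only [Pi.smul_apply, smul_eq_mul, mul_pow]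
    rw [Finset.prod_mul_distrib, Finset.prod_pow_eq_pow_sum, hdeg]
  rw [this]; ring

lemma key_rel (a : ℕ) (c : ℕ)
    (P : Fin (a + 1) → Fin (a + 1) → MvPolynomial (Fin 2) ℝ)
    (hhom : ∀ i j, (P i j).IsHomogeneous (2 * a + 2 * (i : ℕ) + 2 * (j : ℕ) + c))
    (T : Matrix (Fin (a + 1)) (Fin (a + 1)) ℂ)
    (hcomm : ∀ t₁ t₂ : ℝ, ∀ i j : Fin (a + 1),
      ∑ k, T i k * ((MvPolynomial.eval ![Real.cos t₁, Real.cos t₂] (P k j) : ℝ) : ℂ)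
        = ∑ k, ((MvPolynomial.eval ![Real.cos t₁, Real.cos t₂] (P i k) : ℝ) : ℂ) * T k j)
    (x y : ℝ) (hx : |x| ≤ 1) (hy : |y| ≤ 1) (i j k0 : Fin (a + 1)) :
    T i k0 * ((MvPolynomial.eval ![x, y] (P k0 j) : ℝ) : ℂ)
      = ∑ k ∈ Finset.univ.filter (fun k : Fin (a + 1) => (i : ℕ) + (k : ℕ) = (k0 : ℕ) + (j : ℕ)),
          ((MvPolynomial.eval ![x, y] (P i k) : ℝ) : ℂ) * T k j := by
  set pv : Fin (a+1) → Fin (a+1) → ℂ :=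
    fun u v => ((MvPolynomial.eval ![x, y] (P u v) : ℝ) : ℂ) with hpv
  set F : Polynomial ℂ :=
    (∑ k : Fin (a+1), Polynomial.C (T i k * pv k j) * Polynomial.X ^ (2*a+2*(k:ℕ)+2*(j:ℕ)+c))
      - ∑ k : Fin (a+1), Polynomial.C (pv i k * T k j) * Polynomial.X ^ (2*a+2*(i:ℕ)+2*(k:ℕ)+c)
    with hFdef
  have hF : F = 0 := by
    apply Polynomial.eq_zero_of_infinite_isRoot
    apply Set.Infinite.mono _
      (((Set.Ioc_infinite (zero_lt_one (α := ℝ)))).image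
        (Complex.ofReal_injective.injOn))
    rintro z ⟨s, hs, rfl⟩
    obtain ⟨hs0, hs1⟩ := Set.mem_Ioc.mp hs
    have hb : ∀ u : ℝ, |u| ≤ 1 → -1 ≤ s * u ∧ s * u ≤ 1 := by
      intro u hu
      have h1 : |s * u| ≤ 1 := by
        rw [abs_mul, abs_of_pos hs0]
        calc s * |u| ≤ 1 * 1 := mul_le_mul hs1 hu (abs_nonneg u) zero_le_one
          _ = 1 := by ring
      exact ⟨neg_le_of_abs_le h1, le_of_abs_le h1⟩
    obtain ⟨hx1, hx2⟩ := hb x hx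
    obtain ⟨hy1, hy2⟩ := hb y hy
    have hvec : ![s * x, s * y] = s • ![x, y] := by
      funext z; fin_cases z <;> simp
    have hev : ∀ u v : Fin (a+1),
        MvPolynomial.eval ![s * x, s * y] (P u v)
          = s ^ (2*a+2*(u:ℕ)+2*(v:ℕ)+c) * MvPolynomial.eval ![x, y] (P u v) := by
      intro u v
      rw [hvec]
      exact eval_smul_of_isHomogeneous _ (hhom u v) s _
    have heq := hcomm (Real.arccos (s * x)) (Real.arccos (s * y)) i j
    rw [Real.cos_arccos hx1 hx2, Real.cos_arccos hy1 hy2] at heq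
    simp only [hev, Complex.ofReal_mul, Complex.ofReal_pow] at heq
    show Polynomial.eval ((s : ℂ)) F = 0
    rw [hFdef]
    simp only [Polynomial.eval_sub, Polynomial.eval_finset_sum, Polynomial.eval_mul,
      Polynomial.eval_C, Polynomial.eval_pow, Polynomial.eval_X, sub_eq_zero]
    calc ∑ k : Fin (a+1), T i k * pv k j * (s:ℂ) ^ (2*a+2*(k:ℕ)+2*(j:ℕ)+c)
        = ∑ k : Fin (a+1), T i k * ((s:ℂ) ^ (2*a+2*(k:ℕ)+2*(j:ℕ)+c) * pv k j) := by
          apply Finset.sum_congr rfl; intros; ring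
      _ = ∑ k : Fin (a+1), ((s:ℂ) ^ (2*a+2*(i:ℕ)+2*(k:ℕ)+c) * pv i k) * T k j := heq
      _ = ∑ k : Fin (a+1), pv i k * T k j * (s:ℂ) ^ (2*a+2*(i:ℕ)+2*(k:ℕ)+c) := by
          apply Finset.sum_congr rfl; intros; ring
  have hco := congrArg (fun q => Polynomial.coeff q (2*a+2*(k0:ℕ)+2*(j:ℕ)+c)) hF
  simp only [hFdef, Polynomial.coeff_sub, Polynomial.finset_sum_coeff,
    Polynomial.coeff_C_mul, Polynomial.coeff_X_pow, Polynomial.coeff_zero,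
    mul_ite, mul_one, mul_zero] at hco
  have h1 : (∑ k : Fin (a+1), if 2*a+2*(k0:ℕ)+2*(j:ℕ)+c = 2*a+2*(k:ℕ)+2*(j:ℕ)+c
        then T i k * pv k j else 0) = T i k0 * pv k0 j := by
    rw [Finset.sum_eq_single_of_mem k0 (Finset.mem_univ k0)]
    · simp
    · intro k _ hk
      rw [if_neg]
      intro h
      exact hk (Fin.ext (by omega))
  have h2 : ∀ k : Fin (a+1),
      (2*a+2*(k0:ℕ)+2*(j:ℕ)+c = 2*a+2*(i:ℕ)+2*(k:ℕ)+c) ↔ ((i:ℕ)+(k:ℕ) = (k0:ℕ)+(j:ℕ)) := by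
    intro k; omega
  simp only [h1, h2] at hco
  rw [Finset.sum_filter]
  rw [sub_eq_zero] at hco
  exact hco

lemma exists_box_point {n : ℕ} (p : MvPolynomial (Fin 2) ℝ)
    (hp : p.IsHomogeneous n) (hne : p ≠ 0) :
    ∃ x y : ℝ, |x| ≤ 1 ∧ |y| ≤ 1 ∧ MvPolynomial.eval ![x, y] p ≠ 0 := by
  obtain ⟨v, hv⟩ : ∃ v, MvPolynomial.eval v p ≠ 0 := by
    by_contra h
    push_neg at h
    exact hne (MvPolynomial.funext fun x => by simp [h x])
  set M : ℝ := max (max |v 0| |v 1|) 1 with hM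
  have hM1 : (1:ℝ) ≤ M := le_max_right _ _
  have hMpos : 0 < M := lt_of_lt_of_le one_pos hM1
  set s : ℝ := M⁻¹ with hs
  have hspos : 0 < s := inv_pos.mpr hMpos
  refine ⟨s * v 0, s * v 1, ?_, ?_, ?_⟩
  · rw [abs_mul, abs_of_pos hspos]
    calc s * |v 0| ≤ s * M := by
          apply mul_le_mul_of_nonneg_left _ hspos.le
          exact le_trans (le_max_left _ _) (le_max_left _ _)
      _ = 1 := inv_mul_cancel₀ hMpos.ne'
  · rw [abs_mul, abs_of_pos hspos]
    calc s * |v 1| ≤ s * M := by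
          apply mul_le_mul_of_nonneg_left _ hspos.le
          exact le_trans (le_max_right _ _) (le_max_left _ _)
      _ = 1 := inv_mul_cancel₀ hMpos.ne'
  · have hvec : ![s * v 0, s * v 1] = s • v := by
      funext z; fin_cases z <;> simp
    rw [hvec, eval_smul_of_isHomogeneous p hp s v]
    exact mul_ne_zero (pow_ne_zero _ hspos.ne') hv

/-- If the entries of a matrix-valued function `S(t₁,t₂)` are given by nonzero homogeneous
polynomials in `(cos t₁, cos t₂)` of degree `2a+2i+2j+c`, then any complex matrix `T`
commuting with all `S(t₁,t₂)` is a scalar multiple of the identity. -/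
theorem commutant_trivial (a : ℕ) (ha : 1 ≤ a) (c : ℕ)
    (S : ℝ → ℝ → Matrix (Fin (a + 1)) (Fin (a + 1)) ℝ)
    (P : Fin (a + 1) → Fin (a + 1) → MvPolynomial (Fin 2) ℝ)
    (hhom : ∀ i j, (P i j).IsHomogeneous (2 * a + 2 * (i : ℕ) + 2 * (j : ℕ) + c))
    (hne : ∀ i j, P i j ≠ 0)
    (hS : ∀ t₁ t₂ i j, S t₁ t₂ i j = MvPolynomial.eval ![Real.cos t₁, Real.cos t₂] (P i j))
    (T : Matrix (Fin (a + 1)) (Fin (a + 1)) ℂ)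
    (hT : ∀ t₁ t₂ : ℝ,
      T * (S t₁ t₂).map (Complex.ofReal) = (S t₁ t₂).map (Complex.ofReal) * T) :
    ∃ z : ℂ, T = z • 1 := by
  have hcomm : ∀ t₁ t₂ : ℝ, ∀ i j : Fin (a + 1),
      ∑ k, T i k * ((MvPolynomial.eval ![Real.cos t₁, Real.cos t₂] (P k j) : ℝ) : ℂ)
        = ∑ k, ((MvPolynomial.eval ![Real.cos t₁, Real.cos t₂] (P i k) : ℝ) : ℂ) * T k j := by
    intro t₁ t₂ i j
    have h := (Matrix.ext_iff.mpr (hT t₁ t₂)) i j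
    rw [Matrix.mul_apply, Matrix.mul_apply] at h
    simpa only [Matrix.map_apply, hS] using h
  have key := fun (x y : ℝ) hx hy i j k0 =>
    key_rel a c P hhom T hcomm x y hx hy i j k0
  have hoff : ∀ i k : Fin (a + 1), i ≠ k → T i k = 0 := by
    intro i k hik
    rcases Nat.lt_or_ge (i : ℕ) (k : ℕ) with h | h
    · obtain ⟨x, y, hx, hy, hp⟩ :=
        exists_box_point (P k (Fin.last a)) (hhom k (Fin.last a)) (hne k (Fin.last a))
      have hk := key x y hx hy i (Fin.last a) k
      rw [Finset.sum_eq_zero] at hk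
      · exact (mul_eq_zero.mp hk).resolve_right (Complex.ofReal_ne_zero.mpr hp)
      · intro k' hk'
        exfalso
        rw [Finset.mem_filter] at hk'
        have h1 := hk'.2
        have h2 := k'.isLt
        rw [Fin.val_last] at h1
        omega
    · have hlt : (k : ℕ) < (i : ℕ) :=
        lt_of_le_of_ne h (fun hh => hik (Fin.ext hh.symm))
      obtain ⟨x, y, hx, hy, hp⟩ := exists_box_point (P k 0) (hhom k 0) (hne k 0)
      have hk := key x y hx hy i 0 k
      rw [Finset.sum_eq_zero] at hk
      · exact (mul_eq_zero.mp hk).resolve_right (Complex.ofReal_ne_zero.mpr hp)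
      · intro k' hk'
        exfalso
        rw [Finset.mem_filter] at hk'
        have h1 := hk'.2
        simp only [Fin.val_zero] at h1
        omega
  have hdiag : ∀ i : Fin (a + 1), T i i = T 0 0 := by
    intro i
    obtain ⟨x, y, hx, hy, hp⟩ := exists_box_point (P i 0) (hhom i 0) (hne i 0)
    have hk := key x y hx hy i 0 i
    have hfil : Finset.univ.filter
        (fun k : Fin (a + 1) => (i : ℕ) + (k : ℕ) = (i : ℕ) + ((0 : Fin (a + 1)) : ℕ))
        = {0} := by
      ext k
      rw [Finset.mem_filter]
      simp only [Finset.mem_filter, Finset.mem_univ, true_and, Finset.mem_singleton,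
        Fin.val_zero, Fin.ext_iff]
      omega
    rw [hfil, Finset.sum_singleton] at hk
    rw [mul_comm] at hk
    exact mul_left_cancel₀ (Complex.ofReal_ne_zero.mpr hp) hk
  refine ⟨T 0 0, ?_⟩
  ext i j
  by_cases h : i = j
  · subst h
    simp [Matrix.smul_apply, Matrix.one_apply, hdiag i]
  · simp [Matrix.smul_apply, Matrix.one_apply, h, hoff i j h]
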